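/- ∑_{n=0}^∞ (1/(4n+1)) · ((1/2)_n / n!)² = π² / (4 Γ(3/4)⁴), where (1/2)_n is the Pochhammer symbol. -/

import Mathlib

open scoped Real
open MeasureTheory Set

noncomputable def poch (x : ℝ) (n : ℕ) : ℝ := ∏ k ∈ Finset.range n, (x + k)

noncomputable def rc (n : ℕ) : ℝ := poch (1/2) n / (n.factorial : ℝ)

lemma rc_zero : rc 0 = 1 := by simp [rc, poch]

lemma rc_succ (n : ℕ) : rc (n + 1) = rc n * ((2 * n + 1) / (2 * n + 2)) := by
  have h1 : poch (1/2) (n+1) = poch (1/2) n * (1/2 + n) := Finset.prod_range_succ _ _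
  have h2 : ((n+1).factorial : ℝ) = (n.factorial : ℝ) * (n + 1) := by
    rw [Nat.factorial_succ]; push_cast; ring
  have h3 : (n.factorial : ℝ) ≠ 0 := Nat.cast_ne_zero.2 n.factorial_ne_zero
  have h4 : (n : ℝ) + 1 ≠ 0 := by positivity
  rw [rc, rc, h1, h2]
  field_simp
  ring

lemma rc_pos (n : ℕ) : 0 < rc n := by
  induction n with
  | zero => rw [rc_zero]; norm_num
  | succ n ih => rw [rc_succ]; positivity

lemma rc_le_one (n : ℕ) : rc n ≤ 1 := by
  induction n with
  | zero => rw [rc_zero]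
  | succ n ih =>
    rw [rc_succ]
    have h : (2*(n:ℝ)+1)/(2*n+2) ≤ 1 := by
      rw [div_le_one (by positivity)]; linarith
    nlinarith [rc_pos n]

lemma rc_sq_mul_le (n : ℕ) : rc n ^ 2 * (2 * n + 1) ≤ 1 := by
  induction n with
  | zero => rw [rc_zero]; norm_num
  | succ n ih =>
    have h2 : (0:ℝ) < 2*(n:ℝ)+2 := by positivity
    have e : rc (n+1) ^ 2 * (2 * (n+1 : ℕ) + 1)
        = rc n ^ 2 * (2 * n + 1) * ((2*(n:ℝ)+1) * (2*n+3) / (2*n+2)^2) := by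
      rw [rc_succ]; push_cast; field_simp; ring
    rw [e]
    have hfac : (2*(n:ℝ)+1) * (2*n+3) / (2*n+2)^2 ≤ 1 := by
      rw [div_le_one (by positivity)]; nlinarith
    have h0 : 0 ≤ rc n ^ 2 * (2 * (n:ℝ) + 1) := by positivity
    nlinarith

lemma rc_le_inv_sqrt (n : ℕ) : rc n ≤ 1 / Real.sqrt (n + 1) := by
  have h1 : rc n ^ 2 ≤ 1/(n+1) := by
    rw [le_div_iff₀ (by positivity)]
    nlinarith [rc_sq_mul_le n, rc_pos n, sq_nonneg (rc n), Nat.cast_nonneg (α := ℝ) n]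
  have h2 := Real.sqrt_le_sqrt h1
  rw [Real.sqrt_sq (rc_pos n).le] at h2
  refine h2.trans ?_
  rw [one_div, one_div, Real.sqrt_inv]

lemma rc_gamma (n : ℕ) : Real.Gamma ((n:ℝ) + 1/2) = Real.Gamma (1/2) * n.factorial * rc n := by
  induction n with
  | zero => simp [rc_zero]
  | succ n ih =>
    have h : ((n:ℝ) + 1 + 1/2) = ((n:ℝ) + 1/2) + 1 := by ring
    push_cast
    rw [h, Real.Gamma_add_one (by positivity), ih, rc_succ, Nat.factorial_succ]
    push_cast
    field_simp

/-- summability of `rc n * x ^ n` for `|x| < 1` -/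
lemma summable_rc_pow {x : ℝ} (hx : |x| < 1) : Summable (fun n => rc n * x ^ n) := by
  apply Summable.of_norm
  apply Summable.of_nonneg_of_le (fun n => norm_nonneg _) (fun n => ?_)
    (summable_geometric_of_lt_one (abs_nonneg x) hx)
  rw [norm_mul, norm_pow, Real.norm_eq_abs, Real.norm_eq_abs,
    abs_of_pos (rc_pos n)]
  calc rc n * |x| ^ n ≤ 1 * |x| ^ n := by
        apply mul_le_mul_of_nonneg_right (rc_le_one n) (by positivity)
    _ = |x| ^ n := one_mul _
-- binomial series for (1-x)^(-1/2)

lemma summable_add_one_mul_geom {y : ℝ} (hy : |y| < 1) :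
    Summable (fun n : ℕ => ((n:ℝ)+1) * y ^ n) := by
  have h := summable_pow_mul_geometric_of_norm_lt_one (k := 1) (r := y)
    (by rwa [Real.norm_eq_abs])
  have h2 : Summable (fun n : ℕ => y ^ n) :=
    summable_geometric_of_norm_lt_one (by rwa [Real.norm_eq_abs])
  exact (h.add h2).congr fun n => by push_cast [pow_one]; ring

lemma summable_mul_geom_nsub {y : ℝ} (hy : |y| < 1) :
    Summable (fun n : ℕ => (n:ℝ) * y ^ (n-1)) := by
  apply (summable_nat_add_iff (f := fun n : ℕ => (n:ℝ) * y ^ (n-1)) 1).1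
  apply (summable_add_one_mul_geom hy).congr
  intro n
  push_cast [Nat.add_sub_cancel]
  ring

noncomputable def rf (x : ℝ) : ℝ := ∑' n, rc n * x ^ n

noncomputable def rD (x : ℝ) : ℝ := ∑' n : ℕ, ((n:ℝ) + 1) * rc (n+1) * x ^ n

lemma summable_deriv_aux {x : ℝ} (hx : |x| < 1) :
    Summable (fun n : ℕ => ((n:ℝ)+1) * rc (n+1) * x ^ n) := by
  have habs : |(|x|)| < 1 := by rwa [abs_abs]
  apply Summable.of_norm
  apply Summable.of_nonneg_of_le (fun n => norm_nonneg _) (fun n => ?_)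
    (summable_add_one_mul_geom habs)
  rw [norm_mul, norm_mul, norm_pow, Real.norm_eq_abs, Real.norm_eq_abs, Real.norm_eq_abs,
    abs_of_pos (rc_pos _), abs_of_pos (show (0:ℝ) < (n:ℝ)+1 by positivity)]
  calc ((n:ℝ)+1) * rc (n+1) * |x| ^ n ≤ ((n:ℝ)+1) * 1 * |x| ^ n := by
        gcongr
        exact rc_le_one _
    _ = ((n:ℝ)+1) * |x| ^ n := by ring

lemma hasDerivAt_rf {x : ℝ} (hx : |x| < 1) : HasDerivAt rf (rD x) x := by
  set r : ℝ := (|x| + 1) / 2 with hr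
  have hx0 := abs_nonneg x
  have hr0 : 0 < r := by rw [hr]; linarith
  have hxr : |x| < r := by rw [hr]; linarith
  have hr1 : r < 1 := by rw [hr]; linarith
  have hrabs : |r| < 1 := by rwa [abs_of_pos hr0]
  have hu : Summable (fun n : ℕ => (n:ℝ) * r ^ (n-1)) := summable_mul_geom_nsub hrabs
  have key : HasDerivAt (fun z => ∑' n, rc n * z ^ n) (∑' n : ℕ, (n:ℝ) * rc n * x ^ (n-1)) x := by
    apply hasDerivAt_tsum_of_isPreconnected hu (isOpen_Ioo (a := -r) (b := r))
      (convex_Ioo _ _).isPreconnected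
      (g := fun n z => rc n * z ^ n) (g' := fun n z => (n:ℝ) * rc n * z ^ (n-1))
      (y₀ := 0)
    · intro n y _
      have := (hasDerivAt_pow n y).const_mul (rc n)
      convert this using 1
      rfl
      ring
    · intro n y hy
      rw [Real.norm_eq_abs, abs_mul, abs_mul, abs_of_nonneg (Nat.cast_nonneg (α := ℝ) n),
        abs_of_pos (rc_pos n), abs_pow]
      have hyr : |y| ≤ r := by
        rw [abs_le]; exact ⟨hy.1.le, hy.2.le⟩
      have h1 : |y| ^ (n-1) ≤ r ^ (n-1) := pow_le_pow_left₀ (abs_nonneg y) hyr _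
      have h4 : (n:ℝ) * rc n * |y|^(n-1) ≤ (n:ℝ) * 1 * |y|^(n-1) :=
        mul_le_mul_of_nonneg_right
          (mul_le_mul_of_nonneg_left (rc_le_one n) (Nat.cast_nonneg n))
          (pow_nonneg (abs_nonneg y) _)
      have h5 : (n:ℝ) * 1 * |y|^(n-1) ≤ (n:ℝ) * 1 * r^(n-1) :=
        mul_le_mul_of_nonneg_left h1 (by positivity)
      linarith
    · exact mem_Ioo.2 ⟨by linarith, hr0⟩
    · exact summable_rc_pow (by simp : |(0:ℝ)| < 1)
    · exact mem_Ioo.2 ⟨neg_lt_of_abs_lt hxr, lt_of_abs_lt hxr⟩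
  have hshift : (∑' n : ℕ, (n:ℝ) * rc n * x ^ (n-1)) = rD x := by
    have h0 : HasSum (fun n : ℕ => ((n:ℝ)+1) * rc (n+1) * x ^ n) (rD x) :=
      (summable_deriv_aux hx).hasSum
    have he : (fun n : ℕ => (fun m : ℕ => (m:ℝ) * rc m * x ^ (m-1)) (n+1))
        = (fun n : ℕ => ((n:ℝ)+1) * rc (n+1) * x ^ n) := by
      funext n
      push_cast [Nat.add_sub_cancel]
      ring
    have h2 : HasSum (fun n : ℕ => (n:ℝ) * rc n * x ^ (n-1))
        (rD x + ∑ i ∈ Finset.range 1, (i:ℝ) * rc i * x ^ (i-1)) := by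
      apply (hasSum_nat_add_iff (f := fun n : ℕ => (n:ℝ) * rc n * x ^ (n-1)) 1).1
      rw [he]
      exact h0
    simpa using h2.tsum_eq
  rw [← hshift]
  exact key

lemma ode_rf {x : ℝ} (hx : |x| < 1) : (1 - x) * rD x = rf x / 2 := by
  have h0 : HasSum (fun n : ℕ => ((n:ℝ)+1) * rc (n+1) * x ^ n) (rD x) :=
    (summable_deriv_aux hx).hasSum
  have hrec : ∀ n : ℕ, ((n:ℝ)+1) * rc (n+1) = ((n:ℝ) + 1/2) * rc n := by
    intro n
    rw [rc_succ]
    have h : (2*(n:ℝ)+2) ≠ 0 := by positivity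
    field_simp
  have h1 : HasSum (fun n : ℕ => ((n:ℝ)+1/2) * rc n * x ^ n) (rD x) := by
    have he : (fun n : ℕ => ((n:ℝ)+1/2) * rc n * x ^ n)
        = (fun n : ℕ => ((n:ℝ)+1) * rc (n+1) * x ^ n) := by
      funext n; rw [hrec]
    rw [he]; exact h0
  have h3 : HasSum (fun n : ℕ => (n:ℝ) * rc n * x ^ n) (x * rD x) := by
    have h2 : HasSum (fun n : ℕ => (fun m : ℕ => (m:ℝ) * rc m * x ^ m) (n+1)) (x * rD x) := by
      have := h0.mul_left x
      have he : (fun n : ℕ => x * (((n:ℝ)+1) * rc (n+1) * x ^ n))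
          = (fun n : ℕ => (fun m : ℕ => (m:ℝ) * rc m * x ^ m) (n+1)) := by
        funext n; push_cast; ring
      rw [he] at this
      exact this
    have h4 := (hasSum_nat_add_iff (f := fun n : ℕ => (n:ℝ) * rc n * x ^ n) 1).1 h2
    simpa using h4
  have h5 : HasSum (fun n : ℕ => (1/2:ℝ) * (rc n * x ^ n)) ((1-x) * rD x) := by
    have := h1.sub h3
    have he : (fun n : ℕ => ((n:ℝ)+1/2) * rc n * x ^ n - (n:ℝ) * rc n * x ^ n)
        = (fun n : ℕ => (1/2:ℝ) * (rc n * x ^ n)) := by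
      funext n; ring
    rw [he] at this
    convert this using 1
    rfl
    ring
  have h6 : HasSum (fun n : ℕ => (1/2:ℝ) * (rc n * x ^ n)) (rf x / 2) := by
    have := (summable_rc_pow hx).hasSum.mul_left (1/2:ℝ)
    convert this using 1
    rfl
    rw [rf]; ring
  exact h5.unique h6

lemma rf_zero : rf 0 = 1 := by
  rw [rf]
  rw [tsum_eq_single 0]
  · simp [rc_zero]
  · intro n hn
    simp [zero_pow hn]

lemma rf_eq {x : ℝ} (hx : |x| < 1) : rf x = 1 / Real.sqrt (1 - x) := by
  have hx1 : x < 1 := lt_of_abs_lt hx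
  have hxm1 : -1 < x := neg_lt_of_abs_lt hx
  set F : ℝ → ℝ := fun y => Real.sqrt (1 - y) * rf y with hF
  have hderiv : ∀ y ∈ Ioo (-1:ℝ) 1, HasDerivAt F 0 y := by
    intro y hy
    have hy1 : (0:ℝ) < 1 - y := by linarith [hy.2]
    have hyabs : |y| < 1 := abs_lt.2 ⟨hy.1, hy.2⟩
    have hsq : Real.sqrt (1 - y) ≠ 0 := by positivity
    have hs : HasDerivAt (fun z : ℝ => Real.sqrt (1 - z)) (-(1 / (2 * Real.sqrt (1 - y)))) y := by
      have h1 : HasDerivAt (fun z : ℝ => 1 - z) (-1) y := by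
        simpa using (hasDerivAt_id y).const_sub 1
      have h2 := (Real.hasDerivAt_sqrt (ne_of_gt hy1)).comp y h1
      convert h2 using 1
      rfl
      rfl
      rfl
      ring
    have hprod := hs.mul (hasDerivAt_rf hyabs)
    have : -(1 / (2 * Real.sqrt (1 - y))) * rf y + Real.sqrt (1 - y) * rD y = 0 := by
      have hode := ode_rf hyabs
      have hsqq : Real.sqrt (1 - y) * Real.sqrt (1 - y) = 1 - y := Real.mul_self_sqrt hy1.le
      have h2 : Real.sqrt (1-y) * rD y * (2 * Real.sqrt (1-y)) = 2 * ((1-y) * rD y) := by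
        rw [show Real.sqrt (1-y) * rD y * (2 * Real.sqrt (1-y))
          = (Real.sqrt (1-y) * Real.sqrt (1-y)) * (2 * rD y) from by ring, hsqq]
        ring
      field_simp
      linarith [hode, h2]
    rwa [this] at hprod
  have hval : ∀ y ∈ Ioo (-1:ℝ) 1, F y = 1 := by
    intro y hy
    rcases le_or_gt 0 y with h | h
    · have := constant_of_has_deriv_right_zero (f := F) (a := 0) (b := y)
        (fun z hz => ((hderiv z ⟨by linarith [hz.1], lt_of_le_of_lt hz.2 hy.2⟩).continuousAt).continuousWithinAt)
        (fun z hz => (hderiv z ⟨by linarith [hz.1], hz.2.trans hy.2⟩).hasDerivWithinAt)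
        y ⟨h, le_rfl⟩
      rw [this]
      simp [hF, rf_zero]
    · have h0 := constant_of_has_deriv_right_zero (f := F) (a := y) (b := 0)
        (fun z hz => ((hderiv z ⟨lt_of_lt_of_le hy.1 hz.1, by linarith [hz.2]⟩).continuousAt).continuousWithinAt)
        (fun z hz => (hderiv z ⟨lt_of_lt_of_le hy.1 hz.1, by linarith [hz.2]⟩).hasDerivWithinAt)
        0 ⟨h.le, le_rfl⟩
      rw [← h0]
      simp [hF, rf_zero]
  have hy := hval x ⟨hxm1, hx1⟩
  have hpos : (0:ℝ) < 1 - x := by linarith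
  have hsq : Real.sqrt (1 - x) ≠ 0 := by positivity
  rw [hF] at hy
  field_simp at hy ⊢
  linarith [hy]

lemma hasSum_binomial {x : ℝ} (hx : |x| < 1) :
    HasSum (fun n : ℕ => rc n * x ^ n) (1 / Real.sqrt (1 - x)) := by
  have := (summable_rc_pow hx).hasSum
  rwa [show (∑' n, rc n * x ^ n) = 1 / Real.sqrt (1 - x) from (rf_eq hx)] at this
-- Real Beta integral on Ioo 0 1

lemma complex_beta_eq (p q : ℝ) :
    Complex.betaIntegral p q
      = ((∫ y in (0:ℝ)..1, y ^ (p-1) * (1-y) ^ (q-1) : ℝ) : ℂ) := by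
  rw [Complex.betaIntegral, ← intervalIntegral.integral_ofReal]
  apply intervalIntegral.integral_congr
  intro x hx
  rw [uIcc_of_le (by norm_num : (0:ℝ) ≤ 1)] at hx
  have hx0 : (0:ℝ) ≤ x := hx.1
  have hx1 : (0:ℝ) ≤ 1 - x := by linarith [hx.2]
  simp only [Complex.ofReal_mul]
  rw [Complex.ofReal_cpow hx0, Complex.ofReal_cpow hx1]
  push_cast
  ring

lemma real_beta (p q : ℝ) (hp : 0 < p) (hq : 0 < q) :
    ∫ y in Ioo (0:ℝ) 1, y ^ (p-1) * (1-y) ^ (q-1)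
      = Real.Gamma p * Real.Gamma q / Real.Gamma (p+q) := by
  have h := Complex.Gamma_mul_Gamma_eq_betaIntegral
    (s := (p:ℂ)) (t := (q:ℂ)) (by simpa using hp) (by simpa using hq)
  rw [complex_beta_eq] at h
  have hpq : ((p:ℂ) + q) = ((p+q : ℝ) : ℂ) := by push_cast; ring
  rw [hpq, Complex.Gamma_ofReal, Complex.Gamma_ofReal, Complex.Gamma_ofReal] at h
  have h2 : Real.Gamma p * Real.Gamma q
      = Real.Gamma (p+q) * ∫ y in (0:ℝ)..1, y ^ (p-1) * (1-y) ^ (q-1) := by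
    exact_mod_cast h
  have hne : Real.Gamma (p+q) ≠ 0 := (Real.Gamma_pos_of_pos (by linarith)).ne'
  have h3 : (∫ y in (0:ℝ)..1, y ^ (p-1) * (1-y) ^ (q-1))
      = Real.Gamma p * Real.Gamma q / Real.Gamma (p+q) := by
    field_simp
    linarith [h2]
  rw [← h3, intervalIntegral.integral_of_le (by norm_num : (0:ℝ) ≤ 1),
    ← integral_Ioc_eq_integral_Ioo]

lemma integrableOn_beta (p q : ℝ) (hp : 0 < p) (hq : 0 < q) :
    IntegrableOn (fun y => y ^ (p-1) * (1-y) ^ (q-1)) (Ioo (0:ℝ) 1) := by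
  have h := Complex.betaIntegral_convergent (u := (p:ℂ)) (v := (q:ℂ))
    (by simpa using hp) (by simpa using hq)
  have h2 : IntegrableOn (fun x : ℝ => (x:ℂ) ^ ((p:ℂ)-1) * (1-(x:ℂ)) ^ ((q:ℂ)-1))
      (Ioo (0:ℝ) 1) := by
    have := (intervalIntegrable_iff_integrableOn_Ioc_of_le (by norm_num : (0:ℝ) ≤ 1)).1 h
    exact this.mono_set Ioo_subset_Ioc_self
  have h3 : IntegrableOn (fun x : ℝ => ((x ^ (p-1) * (1-x) ^ (q-1) : ℝ) : ℂ))
      (Ioo (0:ℝ) 1) := by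
    apply h2.congr_fun _ measurableSet_Ioo
    intro x hx
    simp only [Complex.ofReal_mul]
    rw [Complex.ofReal_cpow hx.1.le, Complex.ofReal_cpow (by linarith [hx.2] : (0:ℝ) ≤ 1-x)]
    push_cast
    ring
  simpa [IntegrableOn] using h3.re
-- quartic change of variables

lemma image_quartic : (fun x : ℝ => x ^ 4) '' Ioo 0 1 = Ioo (0:ℝ) 1 := by
  ext y
  constructor
  · rintro ⟨x, hx, rfl⟩
    exact ⟨pow_pos hx.1 4, pow_lt_one₀ hx.1.le hx.2 (by norm_num)⟩
  · intro hy
    refine ⟨y ^ ((1:ℝ)/4), ⟨?_, ?_⟩, ?_⟩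
    · exact Real.rpow_pos_of_pos hy.1 _
    · exact Real.rpow_lt_one hy.1.le hy.2 (by norm_num)
    · show (y ^ ((1:ℝ)/4)) ^ (4:ℕ) = y
      rw [← Real.rpow_natCast (y ^ ((1:ℝ)/4)) 4, ← Real.rpow_mul hy.1.le]
      norm_num

lemma deriv_quartic : ∀ x ∈ Ioo (0:ℝ) 1, HasDerivWithinAt (fun x : ℝ => x ^ 4)
    ((fun x : ℝ => 4 * x ^ 3) x) (Ioo (0:ℝ) 1) x := by
  intro x _
  simpa using (hasDerivAt_pow 4 x).hasDerivWithinAt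

lemma inj_quartic : InjOn (fun x : ℝ => x ^ 4) (Ioo 0 1) := by
  have h := pow_left_strictMonoOn₀ (M₀ := ℝ) (n := 4) (by norm_num)
  exact (h.injOn).mono (fun x hx => le_of_lt hx.1)

lemma quartic_cov (g : ℝ → ℝ) :
    ∫ y in Ioo (0:ℝ) 1, g y = ∫ x in Ioo (0:ℝ) 1, |4 * x ^ 3| • g (x ^ 4) := by
  nth_rewrite 1 [← image_quartic]
  exact integral_image_eq_integral_abs_deriv_smul measurableSet_Ioo deriv_quartic inj_quartic g

lemma quartic_cov_int (g : ℝ → ℝ) :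
    IntegrableOn g (Ioo (0:ℝ) 1) ↔
      IntegrableOn (fun x => |4 * x ^ 3| • g (x ^ 4)) (Ioo (0:ℝ) 1) := by
  nth_rewrite 1 [← image_quartic]
  exact integrableOn_image_iff_integrableOn_abs_deriv_smul measurableSet_Ioo deriv_quartic
    inj_quartic g

/-- the key pointwise identity on (0,1) -/
lemma quartic_integrand (m : ℕ) {x : ℝ} (hx : x ∈ Ioo (0:ℝ) 1) :
    |4 * x ^ 3| • ((fun y => y ^ ((((m:ℝ)+1)/4) - 1) * (1-y) ^ ((1/2 : ℝ) - 1)) (x ^ 4))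
      = 4 * (x ^ m / Real.sqrt (1 - x ^ 4)) := by
  have hx0 : 0 < x := hx.1
  have hx4 : (0:ℝ) < 1 - x ^ 4 := by
    have := pow_lt_one₀ hx.1.le hx.2 (show (4:ℕ) ≠ 0 by norm_num)
    linarith
  have habs : |4 * x ^ 3| = 4 * x ^ 3 := abs_of_pos (by positivity)
  have e1 : (x ^ 4) ^ ((((m:ℝ)+1)/4) - 1) = x ^ ((m:ℝ) - 3) := by
    rw [← Real.rpow_natCast x 4, ← Real.rpow_mul hx0.le]
    norm_num
    ring_nf
  have e2 : ((1 : ℝ) - x ^ 4) ^ ((1/2 : ℝ) - 1) = (Real.sqrt (1 - x ^ 4))⁻¹ := by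
    rw [show (1/2 - 1 : ℝ) = -(1/2) by norm_num, Real.rpow_neg hx4.le, Real.sqrt_eq_rpow]
  have e3 : x ^ 3 * x ^ ((m:ℝ) - 3) = x ^ m := by
    rw [← Real.rpow_natCast x 3, ← Real.rpow_add hx0, ← Real.rpow_natCast x m]
    norm_num
  rw [smul_eq_mul, habs]
  calc 4 * x ^ 3 * ((x ^ 4) ^ ((((m:ℝ)+1)/4) - 1) * (1 - x ^ 4) ^ ((1/2 : ℝ) - 1))
      = 4 * ((x ^ 3 * x ^ ((m:ℝ) - 3)) * (Real.sqrt (1 - x ^ 4))⁻¹) := by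
        rw [e1, e2]; ring
    _ = 4 * (x ^ m / Real.sqrt (1 - x ^ 4)) := by rw [e3]; ring

lemma integral_pow_div_sqrt (m : ℕ) :
    ∫ x in Ioo (0:ℝ) 1, x ^ m / Real.sqrt (1 - x ^ 4)
      = (1/4) * (Real.Gamma (((m:ℝ)+1)/4) * Real.Gamma (1/2)
          / Real.Gamma (((m:ℝ)+1)/4 + 1/2)) := by
  have hp : 0 < ((m:ℝ)+1)/4 := by positivity
  have hq : (0:ℝ) < 1/2 := by norm_num
  have hb := real_beta (((m:ℝ)+1)/4) (1/2) hp hq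
  have hcov := quartic_cov (fun y => y ^ ((((m:ℝ)+1)/4) - 1) * (1-y) ^ ((1/2 : ℝ) - 1))
  rw [hb] at hcov
  have hcongr : ∫ x in Ioo (0:ℝ) 1,
      |4 * x ^ 3| • ((fun y => y ^ ((((m:ℝ)+1)/4) - 1) * (1-y) ^ ((1/2 : ℝ) - 1)) (x ^ 4))
      = ∫ x in Ioo (0:ℝ) 1, 4 * (x ^ m / Real.sqrt (1 - x ^ 4)) := by
    apply setIntegral_congr_fun measurableSet_Ioo
    intro x hx
    exact quartic_integrand m hx
  rw [hcongr, integral_const_mul] at hcov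
  linarith [hcov]

lemma integrableOn_pow_div_sqrt (m : ℕ) :
    IntegrableOn (fun x => x ^ m / Real.sqrt (1 - x ^ 4)) (Ioo (0:ℝ) 1) := by
  have hp : 0 < ((m:ℝ)+1)/4 := by positivity
  have h := (quartic_cov_int (fun y => y ^ ((((m:ℝ)+1)/4) - 1) * (1-y) ^ ((1/2 : ℝ) - 1))).1
    (integrableOn_beta _ _ hp (by norm_num))
  have h2 : IntegrableOn (fun x => 4 * (x ^ m / Real.sqrt (1 - x ^ 4))) (Ioo (0:ℝ) 1) := by
    apply h.congr_fun _ measurableSet_Ioo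
    intro x hx
    exact quartic_integrand m hx
  have h3 : IntegrableOn (fun x => (1/4 : ℝ) * (4 * (x ^ m / Real.sqrt (1 - x ^ 4))))
      (Ioo (0:ℝ) 1) := h2.const_mul _
  apply h3.congr_fun _ measurableSet_Ioo
  intro x hx
  ring
-- the series G and its properties

noncomputable def rG (w : ℝ) : ℝ := ∑' n : ℕ, 2 * rc n / (4*(n:ℝ)+1) * w ^ (4*n+1)

lemma rc_sq_le' (n : ℕ) : rc n ^ 2 ≤ 1/((n:ℝ)+1) := by
  rw [le_div_iff₀ (by positivity)]
  nlinarith [rc_sq_mul_le n, rc_pos n, sq_nonneg (rc n), Nat.cast_nonneg (α := ℝ) n]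

lemma u_pos (n : ℕ) : 0 < 2 * rc n / (4*(n:ℝ)+1) :=
  div_pos (by nlinarith [rc_pos n]) (by positivity)

lemma summable_u : Summable (fun n : ℕ => 2 * rc n / (4*(n:ℝ)+1)) := by
  have hsum : Summable (fun n : ℕ => 2 * (1/((n:ℝ)+1) ^ ((3:ℝ)/2))) := by
    apply Summable.mul_left
    have h := (Real.summable_one_div_nat_rpow (p := (3:ℝ)/2)).2 (by norm_num)
    have h2 := (summable_nat_add_iff (f := fun n : ℕ => 1/(n:ℝ) ^ ((3:ℝ)/2)) 1).2 h
    apply h2.congr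
    intro n
    push_cast
    ring_nf
  apply Summable.of_nonneg_of_le (fun n => (u_pos n).le) (fun n => ?_) hsum
  have hr : ((n:ℝ)+1) ^ ((3:ℝ)/2) = ((n:ℝ)+1) * Real.sqrt ((n:ℝ)+1) := by
    rw [show (3:ℝ)/2 = 1 + 1/2 by norm_num, Real.rpow_add (by positivity), Real.rpow_one,
      ← Real.sqrt_eq_rpow]
  rw [hr, mul_one_div]
  have hs : (0:ℝ) < Real.sqrt ((n:ℝ)+1) := Real.sqrt_pos.2 (by positivity)
  rw [div_le_div_iff₀ (by positivity) (by positivity)]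
  have h1 : rc n * Real.sqrt ((n:ℝ)+1) ≤ 1 := by
    have h := rc_le_inv_sqrt n
    calc rc n * Real.sqrt ((n:ℝ)+1)
        ≤ (1 / Real.sqrt ((n:ℝ)+1)) * Real.sqrt ((n:ℝ)+1) :=
          mul_le_mul_of_nonneg_right h hs.le
      _ = 1 := by field_simp
  have h2 : ((n:ℝ)+1) ≤ 4*(n:ℝ)+1 := by
    have := Nat.cast_nonneg (α := ℝ) n
    linarith
  have h6 := mul_le_mul_of_nonneg_left h1 (show (0:ℝ) ≤ 2*((n:ℝ)+1) by positivity)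
  nlinarith [Real.sqrt_nonneg ((n:ℝ)+1), rc_pos n]

lemma summable_a : Summable (fun n : ℕ => rc n ^ 2 / (4*(n:ℝ)+1)) := by
  have hsum : Summable (fun n : ℕ => 1/((n:ℝ)+1) ^ (2:ℕ)) := by
    have h := (summable_nat_add_iff (f := fun n : ℕ => 1/(n:ℝ) ^ (2:ℕ)) 1).2
      (Real.summable_one_div_nat_pow.2 (by norm_num))
    apply h.congr
    intro n
    push_cast
    ring_nf
  apply Summable.of_nonneg_of_le (fun n => by positivity) (fun n => ?_) hsum
  have h2 : ((n:ℝ)+1) ≤ 4*(n:ℝ)+1 := by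
    have := Nat.cast_nonneg (α := ℝ) n
    linarith
  rw [div_le_div_iff₀ (by positivity) (by positivity)]
  have h4 : rc n ^ 2 * ((n:ℝ)+1) ≤ 1 := (le_div_iff₀ (by positivity)).1 (rc_sq_le' n)
  have h6 := mul_le_mul_of_nonneg_right h4 (show (0:ℝ) ≤ (n:ℝ)+1 by positivity)
  have h5 : (0:ℝ) ≤ rc n ^2 := sq_nonneg _
  nlinarith [Nat.cast_nonneg (α := ℝ) n]

lemma summable_G {w : ℝ} (hw : |w| ≤ 1) :
    Summable (fun n : ℕ => 2 * rc n / (4*(n:ℝ)+1) * w ^ (4*n+1)) := by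
  apply Summable.of_norm
  apply Summable.of_nonneg_of_le (fun n => norm_nonneg _) (fun n => ?_) summable_u
  rw [norm_mul, norm_pow, Real.norm_eq_abs, Real.norm_eq_abs,
    abs_of_pos (u_pos n)]
  calc 2 * rc n / (4*(n:ℝ)+1) * |w| ^ (4*n+1)
      ≤ 2 * rc n / (4*(n:ℝ)+1) * 1 := by
        apply mul_le_mul_of_nonneg_left (pow_le_one₀ (abs_nonneg w) hw) (u_pos n).le
    _ = 2 * rc n / (4*(n:ℝ)+1) := mul_one _

lemma hasSum_G {w : ℝ} (hw : |w| ≤ 1) :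
    HasSum (fun n : ℕ => 2 * rc n / (4*(n:ℝ)+1) * w ^ (4*n+1)) (rG w) :=
  (summable_G hw).hasSum

lemma rG_zero : rG 0 = 0 := by
  rw [rG]
  convert tsum_zero with n
  rw [zero_pow (by omega : 4*n+1 ≠ 0), mul_zero]

lemma hasSum_K {w : ℝ} (hw : w ∈ Ioo (0:ℝ) 1) :
    HasSum (fun n : ℕ => 2 * rc n * w ^ (4*n)) (2 / Real.sqrt (1 - w ^ 4)) := by
  have hw4 : |w ^ 4| < 1 := by
    rw [abs_of_pos (pow_pos hw.1 4)]
    exact pow_lt_one₀ hw.1.le hw.2 (by norm_num)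
  have h := (hasSum_binomial hw4).mul_left 2
  have he : (fun n : ℕ => 2 * (rc n * (w ^ 4) ^ n)) = (fun n : ℕ => 2 * rc n * w ^ (4*n)) := by
    funext n
    rw [← pow_mul]
    ring
  rw [he] at h
  have he2 : (2:ℝ) / Real.sqrt (1 - w ^ 4) = 2 * (1 / Real.sqrt (1 - w ^ 4)) := by ring
  rw [he2]
  exact h

lemma continuousOn_rG : ContinuousOn rG (Icc (-1:ℝ) 1) := by
  have h := tendstoUniformlyOn_tsum (f := fun (n : ℕ) (w : ℝ) => 2 * rc n / (4*(n:ℝ)+1) * w ^ (4*n+1))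
    summable_u (s := Icc (-1:ℝ) 1) ?_
  · apply h.continuousOn
    refine Filter.Frequently.of_forall fun t => ?_
    exact (continuous_finset_sum t fun n _ =>
      (continuous_const.mul (continuous_pow _))).continuousOn
  · intro n x hx
    have hx1 : |x| ≤ 1 := abs_le.2 ⟨hx.1, hx.2⟩
    rw [norm_mul, norm_pow, Real.norm_eq_abs, Real.norm_eq_abs,
      abs_of_pos (u_pos n)]
    calc 2 * rc n / (4*(n:ℝ)+1) * |x| ^ (4*n+1)
        ≤ 2 * rc n / (4*(n:ℝ)+1) * 1 :=
          mul_le_mul_of_nonneg_left (pow_le_one₀ (abs_nonneg x) hx1) (u_pos n).le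
      _ = 2 * rc n / (4*(n:ℝ)+1) := mul_one _

set_option maxHeartbeats 800000 in
lemma hasDerivAt_rG {x : ℝ} (hx : x ∈ Ioo (0:ℝ) 1) :
    HasDerivAt rG (2 / Real.sqrt (1 - x ^ 4)) x := by
  set r : ℝ := (x+1)/2 with hr
  have hx0 := hx.1
  have hx1 := hx.2
  have hr0 : 0 < r := by rw [hr]; linarith
  have hxr : x < r := by rw [hr]; linarith
  have hr1 : r < 1 := by rw [hr]; linarith
  have hu : Summable (fun n : ℕ => 2 * r ^ (4*n)) := by
    apply Summable.mul_left
    have : Summable (fun n : ℕ => (r ^ 4) ^ n) :=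
      summable_geometric_of_lt_one (by positivity) (pow_lt_one₀ hr0.le hr1 (by norm_num))
    apply this.congr
    intro n
    rw [← pow_mul]
  have key : HasDerivAt (fun z => ∑' n : ℕ, 2 * rc n / (4*(n:ℝ)+1) * z ^ (4*n+1))
      (∑' n : ℕ, 2 * rc n * x ^ (4*n)) x := by
    apply hasDerivAt_tsum_of_isPreconnected hu (isOpen_Ioo (a := -r) (b := r))
      (convex_Ioo _ _).isPreconnected
      (g := fun n z => 2 * rc n / (4*(n:ℝ)+1) * z ^ (4*n+1))
      (g' := fun n z => 2 * rc n * z ^ (4*n))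
      (y₀ := 0)
    · intro n y _
      have h := (hasDerivAt_pow (4*n+1) y).const_mul (2 * rc n / (4*(n:ℝ)+1))
      convert h using 1
      rfl
      rw [Nat.add_sub_cancel]
      have hcast : ((4*n+1 : ℕ):ℝ) = 4*(n:ℝ)+1 := by push_cast; ring
      rw [hcast]
      have h4 : (4*(n:ℝ)+1) ≠ 0 := by positivity
      field_simp
    · intro n y hy
      rw [norm_mul, norm_pow, Real.norm_eq_abs, Real.norm_eq_abs,
        abs_of_pos (by nlinarith [rc_pos n] : (0:ℝ) < 2 * rc n)]
      have hyr : |y| ≤ r := abs_le.2 ⟨hy.1.le, hy.2.le⟩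
      have h1 : |y| ^ (4*n) ≤ r ^ (4*n) := pow_le_pow_left₀ (abs_nonneg y) hyr _
      calc 2 * rc n * |y| ^ (4*n) ≤ 2 * 1 * r ^ (4*n) := by
            have := mul_le_mul_of_nonneg_right
              (mul_le_mul_of_nonneg_left (rc_le_one n) (by norm_num : (0:ℝ) ≤ 2))
              (pow_nonneg (abs_nonneg y) (4*n))
            have h5 := mul_le_mul_of_nonneg_left h1 (by norm_num : (0:ℝ) ≤ 2)
            nlinarith [rc_pos n, pow_nonneg (abs_nonneg y) (4*n), pow_nonneg hr0.le (4*n)]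
        _ = 2 * r ^ (4*n) := by ring
    · exact mem_Ioo.2 ⟨by linarith, hr0⟩
    · have hz : (fun n : ℕ => 2 * rc n / (4*(n:ℝ)+1) * (0:ℝ) ^ (4*n+1))
          = (fun _ : ℕ => (0:ℝ)) := by
        funext n
        rw [zero_pow (by omega : 4*n+1 ≠ 0), mul_zero]
      rw [hz]
      exact summable_zero
    · exact mem_Ioo.2 ⟨by linarith, hxr⟩
  have hts : (∑' n : ℕ, 2 * rc n * x ^ (4*n)) = 2 / Real.sqrt (1 - x ^ 4) :=
    (hasSum_K hx).tsum_eq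
  rw [hts] at key
  exact key
-- integral identities

lemma sub_pow_pos {w : ℝ} (hw : w ∈ Ioo (0:ℝ) 1) : (0:ℝ) < 1 - w ^ 4 := by
  have := pow_lt_one₀ hw.1.le hw.2 (show (4:ℕ) ≠ 0 by norm_num)
  linarith

lemma integrableOn_K : IntegrableOn (fun w => 2 / Real.sqrt (1 - w ^ 4)) (Ioo (0:ℝ) 1) := by
  have h2 : IntegrableOn (fun x : ℝ => 2 * (x ^ (0:ℕ) / Real.sqrt (1 - x ^ 4))) (Ioo (0:ℝ) 1) :=
    (integrableOn_pow_div_sqrt 0).const_mul (2:ℝ)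
  apply h2.congr_fun _ measurableSet_Ioo
  intro x _
  show 2 * (x ^ (0:ℕ) / Real.sqrt (1 - x ^ 4)) = 2 / Real.sqrt (1 - x ^ 4)
  rw [pow_zero]
  ring

lemma integral_K : ∫ w in Ioo (0:ℝ) 1, 2 / Real.sqrt (1 - w ^ 4)
    = (1/2) * (Real.Gamma (1/4) * Real.Gamma (1/2) / Real.Gamma (3/4)) := by
  have hcongr : ∫ w in Ioo (0:ℝ) 1, 2 / Real.sqrt (1 - w ^ 4)
      = ∫ w in Ioo (0:ℝ) 1, 2 * (w ^ (0:ℕ) / Real.sqrt (1 - w ^ 4)) := by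
    apply setIntegral_congr_fun measurableSet_Ioo
    intro x _
    show 2 / Real.sqrt (1 - x ^ 4) = 2 * (x ^ (0:ℕ) / Real.sqrt (1 - x ^ 4))
    rw [pow_zero]
    ring
  rw [hcongr, integral_const_mul, integral_pow_div_sqrt 0]
  norm_num
  ring

lemma wallis (n : ℕ) : ∫ w in Ioo (0:ℝ) 1, w ^ (4*n+1) / Real.sqrt (1 - w ^ 4)
    = (π/4) * rc n := by
  rw [integral_pow_div_sqrt (4*n+1)]
  have e1 : (((4*n+1 : ℕ):ℝ)+1)/4 = (n:ℝ) + 1/2 := by push_cast; ring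
  rw [e1, show (n:ℝ) + 1/2 + 1/2 = (n:ℝ) + 1 by ring, Real.Gamma_nat_eq_factorial, rc_gamma n]
  have hfac : (n.factorial : ℝ) ≠ 0 := Nat.cast_ne_zero.2 n.factorial_ne_zero
  have hpi : Real.Gamma (1/2) * Real.Gamma (1/2) = π := by
    rw [Real.Gamma_one_half_eq]
    exact Real.mul_self_sqrt Real.pi_pos.le
  calc (1/4) * (Real.Gamma (1/2) * (n.factorial:ℝ) * rc n * Real.Gamma (1/2) / (n.factorial:ℝ))
      = (Real.Gamma (1/2) * Real.Gamma (1/2)) * rc n / 4 := by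
        field_simp
    _ = (π/4) * rc n := by rw [hpi]; ring

lemma integral_pow_Ioo (k : ℕ) : ∫ w in Ioo (0:ℝ) 1, w ^ k = 1/((k:ℝ)+1) := by
  rw [← integral_Ioc_eq_integral_Ioo, ← intervalIntegral.integral_of_le zero_le_one,
    integral_pow]
  rw [one_pow, zero_pow (by omega : k + 1 ≠ 0)]
  push_cast
  ring

lemma rG_one : rG 1 = ∫ w in Ioo (0:ℝ) 1, 2 / Real.sqrt (1 - w ^ 4) := by
  set F : ℕ → ℝ → ℝ := fun n w => 2 * rc n * w ^ (4*n) with hF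
  have hInt : ∀ n : ℕ, Integrable (F n) (volume.restrict (Ioo (0:ℝ) 1)) := fun n =>
    (((continuous_const.mul (continuous_pow (4*n))).integrableOn_Icc
      (μ := volume) (a := (0:ℝ)) (b := 1)).mono_set Ioo_subset_Icc_self)
  have hval : ∀ n : ℕ, ∫ w in Ioo (0:ℝ) 1, F n w = 2 * rc n / (4*(n:ℝ)+1) := by
    intro n
    rw [hF, integral_const_mul, integral_pow_Ioo]
    push_cast
    ring
  have hnorm : ∀ n : ℕ, ∫ w in Ioo (0:ℝ) 1, ‖F n w‖ = 2 * rc n / (4*(n:ℝ)+1) := by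
    intro n
    rw [← hval n]
    apply setIntegral_congr_fun measurableSet_Ioo
    intro w hw
    show ‖F n w‖ = F n w
    simp only [hF]
    rw [Real.norm_eq_abs, abs_of_nonneg]
    have h1 : (0:ℝ) ≤ 2 * rc n := by nlinarith [rc_pos n]
    exact mul_nonneg h1 (pow_nonneg hw.1.le _)
  have hsum : Summable (fun n : ℕ => ∫ w in Ioo (0:ℝ) 1, ‖F n w‖) := by
    apply summable_u.congr
    intro n
    rw [hnorm n]
  have key := integral_tsum_of_summable_integral_norm hInt hsum
  have hL : (∑' n : ℕ, ∫ w in Ioo (0:ℝ) 1, F n w) = rG 1 := by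
    rw [tsum_congr hval]
    rw [rG]
    apply tsum_congr
    intro n
    rw [one_pow]
    ring
  have hR : (∫ w in Ioo (0:ℝ) 1, ∑' n : ℕ, F n w)
      = ∫ w in Ioo (0:ℝ) 1, 2 / Real.sqrt (1 - w ^ 4) := by
    apply setIntegral_congr_fun measurableSet_Ioo
    intro w hw
    exact (hasSum_K hw).tsum_eq
  rw [← hL, key, hR]

lemma main_integral : ∫ w in Ioo (0:ℝ) 1, rG w * (2 / Real.sqrt (1 - w ^ 4))
    = π * ∑' n : ℕ, rc n ^ 2 / (4*(n:ℝ)+1) := by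
  set F : ℕ → ℝ → ℝ :=
    fun n w => 2 * rc n / (4*(n:ℝ)+1) * w ^ (4*n+1) * (2 / Real.sqrt (1 - w ^ 4)) with hF
  have hEq : ∀ n : ℕ, EqOn (fun w : ℝ => (2 * rc n / (4*(n:ℝ)+1) * 2) * (w ^ (4*n+1) / Real.sqrt (1 - w ^ 4)))
      (F n) (Ioo (0:ℝ) 1) := by
    intro n w _
    simp only [hF]
    ring
  have hInt : ∀ n : ℕ, Integrable (F n) (volume.restrict (Ioo (0:ℝ) 1)) := by
    intro n
    have hbase : IntegrableOn (fun w : ℝ =>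
        (2 * rc n / (4*(n:ℝ)+1) * 2) * (w ^ (4*n+1) / Real.sqrt (1 - w ^ 4))) (Ioo (0:ℝ) 1) :=
      (integrableOn_pow_div_sqrt (4*n+1)).const_mul _
    exact hbase.congr_fun (hEq n) measurableSet_Ioo
  have hval : ∀ n : ℕ, ∫ w in Ioo (0:ℝ) 1, F n w = π * (rc n ^ 2 / (4*(n:ℝ)+1)) := by
    intro n
    rw [← setIntegral_congr_fun measurableSet_Ioo (hEq n), integral_const_mul, wallis n]
    have h4 : (4*(n:ℝ)+1) ≠ 0 := by positivity
    field_simp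
    ring
  have hnorm : ∀ n : ℕ, ∫ w in Ioo (0:ℝ) 1, ‖F n w‖ = π * (rc n ^ 2 / (4*(n:ℝ)+1)) := by
    intro n
    rw [← hval n]
    apply setIntegral_congr_fun measurableSet_Ioo
    intro w hw
    show ‖F n w‖ = F n w
    simp only [hF]
    rw [Real.norm_eq_abs, abs_of_nonneg]
    have h2 : (0:ℝ) ≤ 2 / Real.sqrt (1 - w ^ 4) :=
      div_nonneg (by norm_num) (Real.sqrt_nonneg _)
    exact mul_nonneg (mul_nonneg (u_pos n).le (pow_nonneg hw.1.le _)) h2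
  have hsum : Summable (fun n : ℕ => ∫ w in Ioo (0:ℝ) 1, ‖F n w‖) := by
    apply (summable_a.mul_left π).congr
    intro n
    rw [hnorm n]
  have key := integral_tsum_of_summable_integral_norm hInt hsum
  have hL : (∑' n : ℕ, ∫ w in Ioo (0:ℝ) 1, F n w) = π * ∑' n : ℕ, rc n ^ 2 / (4*(n:ℝ)+1) := by
    rw [tsum_congr hval, tsum_mul_left]
  have hR : (∫ w in Ioo (0:ℝ) 1, ∑' n : ℕ, F n w)
      = ∫ w in Ioo (0:ℝ) 1, rG w * (2 / Real.sqrt (1 - w ^ 4)) := by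
    apply setIntegral_congr_fun measurableSet_Ioo
    intro w hw
    have hw1 : |w| ≤ 1 := abs_le.2 ⟨by linarith [hw.1], hw.2.le⟩
    exact ((hasSum_G hw1).mul_right (2 / Real.sqrt (1 - w ^ 4))).tsum_eq
  rw [← hR, ← key, hL]

lemma ftc_result : ∫ w in Ioo (0:ℝ) 1, rG w * (2 / Real.sqrt (1 - w ^ 4)) = (rG 1) ^ 2 / 2 := by
  have hcont1 : ContinuousOn rG (Icc (0:ℝ) 1) :=
    continuousOn_rG.mono (fun x hx => ⟨by linarith [hx.1], hx.2⟩)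
  obtain ⟨C, hC⟩ := (isCompact_Icc (a := (0:ℝ)) (b := 1)).exists_bound_of_continuousOn hcont1
  have hKcont : ContinuousOn (fun w : ℝ => 2 / Real.sqrt (1 - w ^ 4)) (Ioo (0:ℝ) 1) := by
    apply ContinuousOn.div continuousOn_const
    · exact (Real.continuous_sqrt.comp (by continuity)).continuousOn
    · intro x hx
      exact (Real.sqrt_pos.2 (sub_pow_pos hx)).ne'
  have hint_Ioo : IntegrableOn (fun w => rG w * (2 / Real.sqrt (1 - w ^ 4))) (Ioo (0:ℝ) 1) := by
    apply Integrable.mono' (integrableOn_K.const_mul C)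
    · exact (((hcont1.mono Ioo_subset_Icc_self).mul hKcont).aestronglyMeasurable measurableSet_Ioo)
    · rw [ae_restrict_iff' measurableSet_Ioo]
      filter_upwards with w hw
      have hK0 : (0:ℝ) ≤ 2 / Real.sqrt (1 - w ^ 4) :=
        div_nonneg (by norm_num) (Real.sqrt_nonneg _)
      rw [Real.norm_eq_abs, abs_mul, abs_of_nonneg hK0]
      apply mul_le_mul_of_nonneg_right _ hK0
      have := hC w ⟨hw.1.le, hw.2.le⟩
      rwa [Real.norm_eq_abs] at this
  have hii : IntervalIntegrable (fun w => rG w * (2 / Real.sqrt (1 - w ^ 4))) volume 0 1 := by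
    rw [intervalIntegrable_iff_integrableOn_Ioc_of_le zero_le_one]
    exact (integrableOn_Ioc_iff_integrableOn_Ioo (by finiteness)).2 hint_Ioo
  have hderiv : ∀ x ∈ Ioo (0:ℝ) 1, HasDerivWithinAt (fun w => rG w ^ 2 / 2)
      (rG x * (2 / Real.sqrt (1 - x ^ 4))) (Ioi x) x := by
    intro x hx
    have h := hasDerivAt_rG hx
    have h2 := (h.mul h).div_const 2
    have e : (fun w => (rG * rG) w / 2) = fun w => rG w ^ 2 / 2 := by funext w; rw [Pi.mul_apply]; ring
    rw [e] at h2
    have e2 : (2 / Real.sqrt (1 - x ^ 4) * rG x + rG x * (2 / Real.sqrt (1 - x ^ 4))) / 2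
        = rG x * (2 / Real.sqrt (1 - x ^ 4)) := by ring
    rw [e2] at h2
    exact h2.hasDerivWithinAt
  have hFTC := intervalIntegral.integral_eq_sub_of_hasDeriv_right_of_le zero_le_one
    ((hcont1.pow 2).div_const 2) hderiv hii
  rw [intervalIntegral.integral_of_le zero_le_one, integral_Ioc_eq_integral_Ioo] at hFTC
  rw [hFTC, Pi.pow_apply, Pi.pow_apply, rG_zero]
  norm_num
theorem ramanujan_sum_one :
    HasSum (fun n : ℕ => (1 / (4 * (n : ℝ) + 1)) * (poch (1/2) n / (n.factorial : ℝ)) ^ 2)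
      (π ^ 2 / (4 * Real.Gamma (3/4) ^ 4)) := by
  have hfun : (fun n : ℕ => (1 / (4 * (n : ℝ) + 1)) * (poch (1/2) n / (n.factorial : ℝ)) ^ 2)
      = fun n : ℕ => rc n ^ 2 / (4*(n:ℝ)+1) := by
    funext n
    rw [show poch (1/2) n / (n.factorial : ℝ) = rc n from rfl]
    ring
  rw [hfun]
  set S : ℝ := ∑' n : ℕ, rc n ^ 2 / (4*(n:ℝ)+1) with hS
  suffices hval : S = π ^ 2 / (4 * Real.Gamma (3/4) ^ 4) by
    have := summable_a.hasSum
    rwa [← hS, hval] at this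
  set g1 : ℝ := Real.Gamma (1/4) with hg1
  set gh : ℝ := Real.Gamma (1/2) with hgh
  set g3 : ℝ := Real.Gamma (3/4) with hg3
  have hg3pos : 0 < g3 := Real.Gamma_pos_of_pos (by norm_num)
  have hg3ne : g3 ≠ 0 := hg3pos.ne'
  have hpine : (π:ℝ) ≠ 0 := Real.pi_ne_zero
  have hs2 : Real.sqrt 2 * Real.sqrt 2 = 2 := Real.mul_self_sqrt (by norm_num)
  have hs2ne : Real.sqrt 2 ≠ 0 := by positivity
  have hghsq : gh * gh = π := by
    rw [hgh, Real.Gamma_one_half_eq]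
    exact Real.mul_self_sqrt Real.pi_pos.le
  -- reflection
  have hrefl : g1 * g3 = π * Real.sqrt 2 := by
    have h := Real.Gamma_mul_Gamma_one_sub (1/4)
    rw [show (1:ℝ) - 1/4 = 3/4 by norm_num, show π * (1/4:ℝ) = π/4 by ring,
      Real.sin_pi_div_four] at h
    rw [hg1, hg3, h]
    rw [div_eq_iff (by positivity : Real.sqrt 2 / 2 ≠ 0)]
    linear_combination (-(π/2)) * hs2
  have hg1sq : g1 ^ 2 * g3 ^ 2 = 2 * π ^ 2 := by
    linear_combination (g1 * g3 + π * Real.sqrt 2) * hrefl + π ^ 2 * hs2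
  -- the analytic identities
  have hE : π * S = ((1/2) * (g1 * gh / g3)) ^ 2 / 2 := by
    have h1 := main_integral
    have h2 := ftc_result
    have h3 := rG_one.trans integral_K
    rw [← hS] at h1
    calc π * S = ∫ w in Ioo (0:ℝ) 1, rG w * (2 / Real.sqrt (1 - w ^ 4)) := h1.symm
      _ = (rG 1) ^ 2 / 2 := h2
      _ = ((1/2) * (g1 * gh / g3)) ^ 2 / 2 := by rw [h3, hg1, hgh, hg3]
  -- final algebra
  have hE2 : π * S * (8 * g3 ^ 2) = g1 ^ 2 * π := by
    rw [hE]
    have : ((1/2) * (g1 * gh / g3)) ^ 2 / 2 * (8 * g3 ^ 2) = g1 ^ 2 * (gh * gh) := by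
      field_simp
      ring
    rw [this, hghsq]
  rw [eq_div_iff (by positivity : (4:ℝ) * g3 ^ 4 ≠ 0)]
  apply mul_left_cancel₀ hpine
  linear_combination (g3 ^ 2 / 2) * hE2 + (π / 2) * hg1sq
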